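/- Let Y^n have joint distribution P_{Y^n} and let Q_Y be a fixed distribution, with Q_Y^n the product. If D(P_{Y^n} ‖ Q_Y^n) ≤ n·D(P_Y ‖ Q_Y) + c where P_Y is the common marginal of each coordinate of Y^n, then for every m ≤ n, the marginal P_{Y^m} of the first m coordinates satisfies D(P_{Y^m} ‖ Q_Y^m) ≤ m·D(P_Y ‖ Q_Y) + (m/n)·c. -/

import Mathlib

set_option maxHeartbeats 1000000

open Finset



private lemma key_pt {r sA sB t : ℝ} (hr : 0 ≤ r) (hrA : r ≤ sA) (hrB : r ≤ sB) (hAt : sA ≤ t) :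
    r * (Real.log sA + Real.log sB - Real.log t - Real.log r) ≤ sA * sB / t - r := by
  rcases hr.eq_or_lt with h0 | h0
  · have hsA : (0:ℝ) ≤ sA := hr.trans hrA
    have hsB : (0:ℝ) ≤ sB := hr.trans hrB
    have ht : (0:ℝ) ≤ t := hsA.trans hAt
    rw [← h0]
    simpa using div_nonneg (mul_nonneg hsA hsB) ht
  · have hA : 0 < sA := h0.trans_le hrA
    have hB : 0 < sB := h0.trans_le hrB
    have ht : 0 < t := hA.trans_le hAt
    have hx : 0 < sA * sB / (t * r) := by positivity
    have hlog : Real.log sA + Real.log sB - Real.log t - Real.log r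
        = Real.log (sA * sB / (t * r)) := by
      rw [Real.log_div (by positivity) (by positivity), Real.log_mul hA.ne' hB.ne',
        Real.log_mul ht.ne' h0.ne']
      ring
    rw [hlog]
    calc r * Real.log (sA * sB / (t * r)) ≤ r * (sA * sB / (t * r) - 1) :=
          mul_le_mul_of_nonneg_left (Real.log_le_sub_one_of_pos hx) hr
      _ = sA * sB / t - r := by field_simp

private lemma submod {W A B : Type*} [Fintype W] [Fintype A] [Fintype B]
    (r : W → A → B → ℝ) (hr : ∀ w a b, 0 ≤ r w a b) :
    (∑ w, ∑ a, (∑ b, r w a b) * Real.log (∑ b, r w a b))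
      + ∑ w, ∑ b, (∑ a, r w a b) * Real.log (∑ a, r w a b)
    ≤ (∑ w, ∑ a, ∑ b, r w a b * Real.log (r w a b))
      + ∑ w, (∑ a, ∑ b, r w a b) * Real.log (∑ a, ∑ b, r w a b) := by
  set sA : W → A → ℝ := fun w a => ∑ b, r w a b with hsA
  set sB : W → B → ℝ := fun w b => ∑ a, r w a b with hsB
  set t : W → ℝ := fun w => ∑ a, ∑ b, r w a b with ht
  have hrA : ∀ w a b, r w a b ≤ sA w a := fun w a b =>
    Finset.single_le_sum (fun b' _ => hr w a b') (mem_univ b)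
  have hrB : ∀ w a b, r w a b ≤ sB w b := fun w a b =>
    Finset.single_le_sum (fun a' _ => hr w a' b) (mem_univ a)
  have hAt : ∀ w a, sA w a ≤ t w := fun w a =>
    Finset.single_le_sum (fun a' _ => Finset.sum_nonneg fun b _ => hr w a' b) (mem_univ a)
  have ht0 : ∀ w, 0 ≤ t w := fun w =>
    Finset.sum_nonneg fun a _ => Finset.sum_nonneg fun b _ => hr w a b
  -- expansions
  have e1 : ∀ w, ∑ a, sA w a * Real.log (sA w a)
      = ∑ a, ∑ b, r w a b * Real.log (sA w a) := fun w =>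
    Finset.sum_congr rfl fun a _ => by rw [Finset.sum_mul]
  have e2 : ∀ w, ∑ b, sB w b * Real.log (sB w b)
      = ∑ a, ∑ b, r w a b * Real.log (sB w b) := fun w => by
    rw [Finset.sum_comm]
    exact Finset.sum_congr rfl fun b _ => by rw [Finset.sum_mul]
  have e3 : ∀ w, t w * Real.log (t w) = ∑ a, ∑ b, r w a b * Real.log (t w) := fun w => by
    rw [ht]
    simp only [Finset.sum_mul]
  have key : ∀ w, ∑ a, ∑ b, (r w a b * Real.log (sA w a) + r w a b * Real.log (sB w b)
      - r w a b * Real.log (t w) - r w a b * Real.log (r w a b)) ≤ 0 := by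
    intro w
    have hb : ∀ a b, r w a b * Real.log (sA w a) + r w a b * Real.log (sB w b)
        - r w a b * Real.log (t w) - r w a b * Real.log (r w a b)
        ≤ sA w a * sB w b / t w - r w a b := by
      intro a b
      have := key_pt (hr w a b) (hrA w a b) (hrB w a b) (hAt w a)
      nlinarith [this]
    calc ∑ a, ∑ b, (r w a b * Real.log (sA w a) + r w a b * Real.log (sB w b)
          - r w a b * Real.log (t w) - r w a b * Real.log (r w a b))
        ≤ ∑ a, ∑ b, (sA w a * sB w b / t w - r w a b) :=
          Finset.sum_le_sum fun a _ => Finset.sum_le_sum fun b _ => hb a b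
      _ = (∑ a, sA w a) * (∑ b, sB w b) / t w - t w := by
          simp only [Finset.sum_sub_distrib]
          have h1 : ∑ a, ∑ b, r w a b = t w := rfl
          rw [h1, Finset.sum_mul, Finset.sum_div]
          congr 1
          refine Finset.sum_congr rfl fun a _ => ?_
          rw [Finset.mul_sum, Finset.sum_div]
      _ = 0 := by
          have h1 : ∑ a, sA w a = t w := rfl
          have h2 : ∑ b, sB w b = t w := Finset.sum_comm
          rw [h1, h2]
          rcases (ht0 w).eq_or_lt with h | h
          · rw [← h]; simp
          · field_simp; ring
  have big : ∑ w, ((∑ a, sA w a * Real.log (sA w a)) + (∑ b, sB w b * Real.log (sB w b))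
      - t w * Real.log (t w) - ∑ a, ∑ b, r w a b * Real.log (r w a b)) ≤ 0 := by
    refine Finset.sum_nonpos fun w _ => ?_
    calc (∑ a, sA w a * Real.log (sA w a)) + (∑ b, sB w b * Real.log (sB w b))
          - t w * Real.log (t w) - ∑ a, ∑ b, r w a b * Real.log (r w a b)
        = ∑ a, ∑ b, (r w a b * Real.log (sA w a) + r w a b * Real.log (sB w b)
            - r w a b * Real.log (t w) - r w a b * Real.log (r w a b)) := by
          rw [e1 w, e2 w, e3 w]
          simp only [← Finset.sum_sub_distrib, ← Finset.sum_add_distrib]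
      _ ≤ 0 := key w
  simp only [Finset.sum_sub_distrib, Finset.sum_add_distrib] at big
  linarith [big]



private lemma fiber_sum {Z Y : Type*} [Fintype Z] [Fintype Y] [DecidableEq Y]
    (p : Z → ℝ) (π : Z → Y) (F : Y → ℝ) :
    ∑ z, p z * F (π z) = ∑ y, (∑ z ∈ univ.filter (fun z => π z = y), p z) * F y := by
  rw [← Finset.sum_fiberwise univ π (fun z => p z * F (π z))]
  refine Finset.sum_congr rfl fun y _ => ?_
  rw [Finset.sum_mul]
  refine Finset.sum_congr rfl fun z hz => ?_
  rw [(Finset.mem_filter.mp hz).2]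

private lemma perm_sum {n k : ℕ} (σ : Equiv.Perm (Fin n)) (F : (Fin n → Fin k) → ℝ) :
    ∑ z : Fin n → Fin k, F (z ∘ σ) = ∑ z, F z := by
  apply Fintype.sum_equiv (Equiv.arrowCongr σ.symm (Equiv.refl (Fin k)))
  intro z
  rfl

noncomputable def hanF {n k : ℕ} (p : (Fin n → Fin k) → ℝ) (j : ℕ) (z : Fin n → Fin k) : ℝ :=
  ∑ z' ∈ univ.filter (fun z' : Fin n → Fin k => ∀ i : Fin n, (i : ℕ) < j → z' i = z i), p z'

noncomputable def hanS {n k : ℕ} (p : (Fin n → Fin k) → ℝ) (j : ℕ) : ℝ :=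
  ∑ z, p z * Real.log (hanF p j z)

private lemma marg_coord {n k : ℕ} (hn : 0 < n) (p : (Fin n → Fin k) → ℝ)
    (hexch : ∀ (σ : Equiv.Perm (Fin n)) (z : Fin n → Fin k), p (z ∘ σ) = p z)
    (t0 : Fin n) (a : Fin k) :
    ∑ z ∈ univ.filter (fun z : Fin n → Fin k => z t0 = a), p z
    = ∑ z ∈ univ.filter (fun z : Fin n → Fin k => z ⟨0, hn⟩ = a), p z := by
  rw [Finset.sum_filter, Finset.sum_filter,
    ← perm_sum (Equiv.swap ⟨0, hn⟩ t0) (fun z => if z ⟨0, hn⟩ = a then p z else 0)]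
  refine Fintype.sum_congr _ _ fun z => ?_
  simp only [Function.comp_apply, Function.comp_def]
  rw [Equiv.swap_apply_left]
  congr 1
  exact (hexch (Equiv.swap ⟨0, hn⟩ t0) z).symm

private lemma coord_exp {n k : ℕ} (hn : 0 < n) (p : (Fin n → Fin k) → ℝ)
    (hexch : ∀ (σ : Equiv.Perm (Fin n)) (z : Fin n → Fin k), p (z ∘ σ) = p z)
    (PY : Fin k → ℝ)
    (hPY : ∀ a, PY a = ∑ z ∈ univ.filter (fun z : Fin n → Fin k => z ⟨0, hn⟩ = a), p z)
    (t0 : Fin n) (G : Fin k → ℝ) :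
    ∑ z, p z * G (z t0) = ∑ a, PY a * G a := by
  rw [fiber_sum p (fun z => z t0) G]
  refine Finset.sum_congr rfl fun a _ => ?_
  rw [marg_coord hn p hexch t0 a, ← hPY a]

private lemma div_formula {n k : ℕ} (hn : 0 < n) (p : (Fin n → Fin k) → ℝ)
    (hp0 : ∀ z, 0 ≤ p z)
    (hexch : ∀ (σ : Equiv.Perm (Fin n)) (z : Fin n → Fin k), p (z ∘ σ) = p z)
    (Q : Fin k → ℝ) (hQ0 : ∀ a, 0 < Q a)
    (PY : Fin k → ℝ)
    (hPY : ∀ a, PY a = ∑ z ∈ univ.filter (fun z : Fin n → Fin k => z ⟨0, hn⟩ = a), p z)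
    (j : ℕ) (hj : j ≤ n) (Pj : (Fin j → Fin k) → ℝ)
    (hPj : ∀ y, Pj y = ∑ z ∈ univ.filter
        (fun z : Fin n → Fin k => ∀ i : Fin j, z (Fin.castLE hj i) = y i), p z) :
    ∑ y, Pj y * Real.log (Pj y / ∏ t, Q (y t))
      = hanS p j - j * ∑ a, PY a * Real.log (Q a) := by
  set π : (Fin n → Fin k) → (Fin j → Fin k) := fun z i => z (Fin.castLE hj i) with hπ
  have hfib : ∀ y, Pj y = ∑ z ∈ univ.filter (fun z => π z = y), p z := by
    intro y
    rw [hPj]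
    congr 1
    refine Finset.filter_congr fun z _ => ?_
    simp [hπ, funext_iff]
  have hPj0 : ∀ y, 0 ≤ Pj y := fun y => by
    rw [hPj]; exact Finset.sum_nonneg fun z _ => hp0 z
  have hprod : ∀ y : Fin j → Fin k, (0:ℝ) < ∏ t, Q (y t) :=
    fun y => Finset.prod_pos fun t _ => hQ0 (y t)
  have hsplit : ∑ y, Pj y * Real.log (Pj y / ∏ t, Q (y t))
      = ∑ y, Pj y * Real.log (Pj y) - ∑ y, Pj y * Real.log (∏ t, Q (y t)) := by
    rw [← Finset.sum_sub_distrib]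
    refine Finset.sum_congr rfl fun y _ => ?_
    rcases (hPj0 y).eq_or_lt with h | h
    · rw [← h]; ring
    · rw [Real.log_div h.ne' (hprod y).ne']; ring
  have hf : ∀ z, hanF p j z = Pj (π z) := by
    intro z
    rw [hanF, hfib]
    congr 1
    refine Finset.filter_congr fun z' _ => ?_
    simp only [hπ, funext_iff]
    constructor
    · intro h i
      exact h (Fin.castLE hj i) i.isLt
    · intro h i hi
      exact h ⟨(i : ℕ), hi⟩
  have hent : ∑ y, Pj y * Real.log (Pj y) = hanS p j := by
    rw [hanS]
    have : ∀ z, p z * Real.log (hanF p j z) = p z * Real.log (Pj (π z)) := fun z => by rw [hf z]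
    rw [Fintype.sum_congr _ _ this, fiber_sum p π (fun y => Real.log (Pj y))]
    refine Finset.sum_congr rfl fun y _ => ?_
    rw [← hfib]
  have hq : ∑ y, Pj y * Real.log (∏ t, Q (y t)) = j * ∑ a, PY a * Real.log (Q a) := by
    have e1 : ∀ y : Fin j → Fin k, Real.log (∏ t, Q (y t)) = ∑ t, Real.log (Q (y t)) :=
      fun y => Real.log_prod fun t _ => (hQ0 (y t)).ne'
    calc ∑ y, Pj y * Real.log (∏ t, Q (y t))
        = ∑ y, Pj y * ∑ t, Real.log (Q (y t)) := by
          refine Finset.sum_congr rfl fun y _ => ?_; rw [e1]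
      _ = ∑ z, p z * ∑ t, Real.log (Q (π z t)) := by
          rw [fiber_sum p π (fun y => ∑ t, Real.log (Q (y t)))]
          refine Finset.sum_congr rfl fun y _ => ?_
          rw [← hfib]
      _ = ∑ t : Fin j, ∑ z, p z * Real.log (Q (z (Fin.castLE hj t))) := by
          simp only [Finset.mul_sum]
          rw [Finset.sum_comm]
      _ = ∑ t : Fin j, ∑ a, PY a * Real.log (Q a) := by
          refine Finset.sum_congr rfl fun t _ => ?_
          exact coord_exp hn p hexch PY hPY (Fin.castLE hj t) (fun a => Real.log (Q a))
      _ = j * ∑ a, PY a * Real.log (Q a) := by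
          rw [Finset.sum_const, Finset.card_univ, Fintype.card_fin, nsmul_eq_mul]
  rw [hsplit, hent, hq]

private lemma han_concave {n k : ℕ} (p : (Fin n → Fin k) → ℝ) (hp0 : ∀ z, 0 ≤ p z)
    (hexch : ∀ (σ : Equiv.Perm (Fin n)) (z : Fin n → Fin k), p (z ∘ σ) = p z)
    (J : ℕ) (hJ2 : J + 2 ≤ n) :
    2 * hanS p (J + 1) ≤ hanS p J + hanS p (J + 2) := by
  have hJn : J < n := by omega
  have hJ1n : J + 1 < n := by omega
  have hJle : J ≤ n := by omega
  set cJ : Fin n := ⟨J, hJn⟩ with hcJ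
  set cJ1 : Fin n := ⟨J + 1, hJ1n⟩ with hcJ1
  set π1 : (Fin n → Fin k) → (Fin J → Fin k) := fun z i => z (Fin.castLE hJle i) with hπ1
  set π12 : (Fin n → Fin k) → (Fin J → Fin k) × Fin k := fun z => (π1 z, z cJ) with hπ12
  set π : (Fin n → Fin k) → (Fin J → Fin k) × Fin k × Fin k :=
    fun z => (π1 z, z cJ, z cJ1) with hπ
  set r : (Fin J → Fin k) → Fin k → Fin k → ℝ :=
    fun w a b => ∑ z ∈ univ.filter (fun z => π z = (w, a, b)), p z with hr
  set s : (Fin J → Fin k) → Fin k → ℝ :=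
    fun w a => ∑ z ∈ univ.filter (fun z => π12 z = (w, a)), p z with hs
  set t : (Fin J → Fin k) → ℝ :=
    fun w => ∑ z ∈ univ.filter (fun z => π1 z = w), p z with htdef
  have hr0 : ∀ w a b, 0 ≤ r w a b := fun w a b => Finset.sum_nonneg fun z _ => hp0 z
  -- sum of r over b gives s
  have hsb : ∀ w a, ∑ b, r w a b = s w a := by
    intro w a
    simp only [hr, hs]
    rw [← Finset.sum_fiberwise (univ.filter (fun z => π12 z = (w, a))) (fun z => z cJ1) p]
    refine Finset.sum_congr rfl fun b _ => ?_
    rw [Finset.filter_filter]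
    congr 1
    refine Finset.filter_congr fun z _ => ?_
    simp only [hπ, hπ12, Prod.mk.injEq]
    tauto
  -- sum of s over a gives t
  have hta : ∀ w, ∑ a, s w a = t w := by
    intro w
    simp only [hs, htdef]
    rw [← Finset.sum_fiberwise (univ.filter (fun z => π1 z = w)) (fun z => z cJ) p]
    refine Finset.sum_congr rfl fun a _ => ?_
    rw [Finset.filter_filter]
    congr 1
    refine Finset.filter_congr fun z _ => ?_
    simp only [hπ12, Prod.mk.injEq]
  -- sum of r over a gives the "other" marginal, equal to s by exchangeability
  have hsa : ∀ w b, ∑ a, r w a b = s w b := by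
    intro w b
    have step1 : ∑ a, r w a b
        = ∑ z ∈ univ.filter (fun z => π1 z = w ∧ z cJ1 = b), p z := by
      simp only [hr]
      rw [← Finset.sum_fiberwise (univ.filter (fun z => π1 z = w ∧ z cJ1 = b)) (fun z => z cJ) p]
      refine Finset.sum_congr rfl fun a _ => ?_
      rw [Finset.filter_filter]
      congr 1
      refine Finset.filter_congr fun z _ => ?_
      simp only [hπ, Prod.mk.injEq]
      tauto
    have step2 : s w b = ∑ z ∈ univ.filter (fun z => π1 z = w ∧ z cJ = b), p z := by
      simp only [hs]
      congr 1
      refine Finset.filter_congr fun z _ => ?_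
      simp only [hπ12, Prod.mk.injEq]
    rw [step1, step2]
    -- swap cJ and cJ1
    rw [Finset.sum_filter, Finset.sum_filter,
      ← perm_sum (Equiv.swap cJ cJ1) (fun z => if π1 z = w ∧ z cJ1 = b then p z else 0)]
    refine Fintype.sum_congr _ _ fun z => ?_
    have hfix : ∀ i : Fin J, (Equiv.swap cJ cJ1) (Fin.castLE hJle i) = Fin.castLE hJle i := by
      intro i
      have hiv : ((Fin.castLE hJle i : Fin n) : ℕ) = (i : ℕ) := rfl
      have hv1 : ((⟨J, hJn⟩ : Fin n) : ℕ) = J := rfl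
      have hv2 : ((⟨J + 1, hJ1n⟩ : Fin n) : ℕ) = J + 1 := rfl
      have hlt := i.isLt
      refine Equiv.swap_apply_of_ne_of_ne ?_ ?_ <;>
        · simp only [Fin.ext_iff, hcJ, hcJ1]
          omega
    have h1 : π1 (z ∘ (Equiv.swap cJ cJ1)) = π1 z := by
      funext i
      simp only [hπ1, Function.comp_apply, hfix i]
    have h2 : (z ∘ (Equiv.swap cJ cJ1)) cJ1 = z cJ := by
      simp only [Function.comp_apply, Equiv.swap_apply_right]
    simp only [Function.comp_def] at h1 h2 ⊢
    rw [h1, h2]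
    congr 1
    exact hexch (Equiv.swap cJ cJ1) z
  -- identification of hanF levels
  have hfJ2 : ∀ z, hanF p (J + 2) z = r (π1 z) (z cJ) (z cJ1) := by
    intro z
    rw [hanF]
    simp only [hr]
    congr 1
    refine Finset.filter_congr fun z' _ => ?_
    simp only [hπ, hπ1, Prod.mk.injEq, funext_iff]
    constructor
    · intro h
      refine ⟨fun i => h _ (by simpa using i.isLt.trans_le (by omega)), h cJ (by simp [hcJ]), h cJ1 (by simp [hcJ1])⟩
    · rintro ⟨h1, h2, h3⟩ i hi
      rcases Nat.lt_or_ge (i : ℕ) J with hlt | hge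
      · exact h1 ⟨(i : ℕ), hlt⟩
      · rcases Nat.lt_or_ge (i : ℕ) (J + 1) with hlt1 | hge1
        · have : i = cJ := Fin.ext (by simp [hcJ]; omega)
          rw [this]; exact h2
        · have : i = cJ1 := Fin.ext (by simp [hcJ1]; omega)
          rw [this]; exact h3
  have hfJ1 : ∀ z, hanF p (J + 1) z = s (π1 z) (z cJ) := by
    intro z
    rw [hanF]
    simp only [hs]
    congr 1
    refine Finset.filter_congr fun z' _ => ?_
    simp only [hπ12, hπ1, Prod.mk.injEq, funext_iff]
    constructor
    · intro h
      exact ⟨fun i => h _ (by simpa using i.isLt.trans_le (by omega)), h cJ (by simp [hcJ])⟩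
    · rintro ⟨h1, h2⟩ i hi
      rcases Nat.lt_or_ge (i : ℕ) J with hlt | hge
      · exact h1 ⟨(i : ℕ), hlt⟩
      · have : i = cJ := Fin.ext (by simp [hcJ]; omega)
        rw [this]; exact h2
  have hfJ : ∀ z, hanF p J z = t (π1 z) := by
    intro z
    rw [hanF]
    simp only [htdef]
    congr 1
    refine Finset.filter_congr fun z' _ => ?_
    simp only [hπ1, funext_iff]
    constructor
    · intro h i
      exact h _ (by simpa using i.isLt)
    · intro h i hi
      exact h ⟨(i : ℕ), hi⟩
  -- Sent expressions
  have hSJ2 : hanS p (J + 2) = ∑ w, ∑ a, ∑ b, r w a b * Real.log (r w a b) := by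
    rw [hanS]
    have : ∀ z, p z * Real.log (hanF p (J+2) z)
        = p z * Real.log ((fun y : (Fin J → Fin k) × Fin k × Fin k => r y.1 y.2.1 y.2.2) (π z)) :=
      fun z => by rw [hfJ2 z]
    rw [Fintype.sum_congr _ _ this,
      fiber_sum p π (fun y => Real.log (r y.1 y.2.1 y.2.2)), Fintype.sum_prod_type]
    simp only [Fintype.sum_prod_type]
    rfl
  have hSJ1 : hanS p (J + 1) = ∑ w, ∑ a, s w a * Real.log (s w a) := by
    rw [hanS]
    have : ∀ z, p z * Real.log (hanF p (J+1) z)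
        = p z * Real.log ((fun y : (Fin J → Fin k) × Fin k => s y.1 y.2) (π12 z)) :=
      fun z => by rw [hfJ1 z]
    rw [Fintype.sum_congr _ _ this,
      fiber_sum p π12 (fun y => Real.log (s y.1 y.2)), Fintype.sum_prod_type]
  have hSJ : hanS p J = ∑ w, t w * Real.log (t w) := by
    rw [hanS]
    have : ∀ z, p z * Real.log (hanF p J z) = p z * Real.log (t (π1 z)) :=
      fun z => by rw [hfJ z]
    rw [Fintype.sum_congr _ _ this, fiber_sum p π1 (fun w => Real.log (t w))]
  -- apply submodularity
  have h := submod r hr0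
  simp only [hsb, hsa] at h
  simp only [hta] at h
  rw [hSJ2, hSJ1, hSJ]
  linarith [h]

private lemma avg_lemma (n m : ℕ) (hm : 0 < m) (hmn : m ≤ n) (D : ℕ → ℝ) (hD0 : D 0 = 0)
    (hconv : ∀ j, j + 2 ≤ n → 2 * D (j + 1) ≤ D j + D (j + 2)) :
    (n : ℝ) * D m ≤ (m : ℝ) * D n := by
  set g : ℕ → ℝ := fun j => D (j + 1) - D j with hg
  have hDsum : ∀ j, D j = ∑ i ∈ Finset.range j, g i := by
    intro j
    induction j with
    | zero => simpa using hD0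
    | succ j ih => rw [Finset.sum_range_succ, ← ih, hg]; ring
  have gmono : ∀ i j, i ≤ j → j + 1 ≤ n → g i ≤ g j := by
    intro i j hij hj
    induction j with
    | zero =>
      have : i = 0 := Nat.le_zero.mp hij
      rw [this]
    | succ j ih =>
      rcases Nat.eq_or_lt_of_le hij with h | h
      · rw [h]
      · have h1 : g i ≤ g j := ih (by omega) (by omega)
        have h2 : 2 * D (j + 1) ≤ D j + D (j + 2) := hconv j (by omega)
        have : g j ≤ g (j + 1) := by simp only [hg]; linarith
        linarith
  have hmm : m - 1 + 1 = m := by omega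
  have h1 : D m ≤ (m : ℝ) * g (m - 1) := by
    rw [hDsum m]
    have := Finset.sum_le_card_nsmul (Finset.range m) g (g (m - 1))
      (fun i hi => gmono i (m - 1) (by simp at hi; omega) (by omega))
    simpa [Finset.card_range, nsmul_eq_mul] using this
  have h2 : ((n - m : ℕ) : ℝ) * g (m - 1) ≤ ∑ i ∈ Finset.Ico m n, g i := by
    have := Finset.card_nsmul_le_sum (Finset.Ico m n) g (g (m - 1))
      (fun i hi => gmono (m - 1) i (by simp [Finset.mem_Ico] at hi; omega)
        (by simp [Finset.mem_Ico] at hi; omega))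
    simpa [Nat.card_Ico, nsmul_eq_mul] using this
  have h3 : D n = D m + ∑ i ∈ Finset.Ico m n, g i := by
    simp only [hDsum n, hDsum m, Finset.range_eq_Ico]
    rw [← Finset.sum_Ico_consecutive g (Nat.zero_le m) hmn]
  have hcast : ((n - m : ℕ) : ℝ) = (n : ℝ) - (m : ℝ) := by
    rw [Nat.cast_sub hmn]
  rw [hcast] at h2
  have hnm : (0:ℝ) ≤ (n : ℝ) - (m : ℝ) := by
    have := (Nat.cast_le (α := ℝ)).mpr hmn; linarith
  have hm0 : (0:ℝ) ≤ (m : ℝ) := Nat.cast_nonneg m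
  have h3' : (m : ℝ) * D n = (m : ℝ) * D m + (m : ℝ) * ∑ i ∈ Finset.Ico m n, g i := by
    rw [h3]; ring
  nlinarith [mul_le_mul_of_nonneg_left h1 hnm, mul_le_mul_of_nonneg_left h2 hm0, h3']

/-- Han's-inequality consequence: if the exchangeable law of Y^n satisfies
D(P_{Y^n} ‖ Q^n) ≤ n·D(P_Y‖Q) + c, then for every m ≤ n the marginal of the first m
coordinates satisfies D(P_{Y^m} ‖ Q^m) ≤ m·D(P_Y‖Q) + (m/n)·c. -/
theorem han_marginal_bound (n m k : ℕ) (hm : 0 < m) (hmn : m ≤ n)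
    (p : (Fin n → Fin k) → ℝ) (hp0 : ∀ z, 0 ≤ p z) (hp1 : ∑ z, p z = 1)
    (hexch : ∀ (σ : Equiv.Perm (Fin n)) (z : Fin n → Fin k), p (z ∘ σ) = p z)
    (Q : Fin k → ℝ) (hQ0 : ∀ a, 0 < Q a) (hQ1 : ∑ a, Q a = 1)
    (c : ℝ)
    (PY : Fin k → ℝ)
    (hPY : ∀ a, PY a = ∑ z ∈ Finset.univ.filter
        (fun z : Fin n → Fin k => z ⟨0, by omega⟩ = a), p z)
    (hyp : ∑ z : Fin n → Fin k, p z * Real.log (p z / ∏ t, Q (z t))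
        ≤ n * (∑ a, PY a * Real.log (PY a / Q a)) + c)
    (Pm : (Fin m → Fin k) → ℝ)
    (hPm : ∀ y, Pm y = ∑ z ∈ Finset.univ.filter
        (fun z : Fin n → Fin k => ∀ i : Fin m, z (Fin.castLE hmn i) = y i), p z) :
    ∑ y : Fin m → Fin k, Pm y * Real.log (Pm y / ∏ t, Q (y t))
      ≤ m * (∑ a, PY a * Real.log (PY a / Q a)) + ((m : ℝ) / n) * c := by
  have hn : 0 < n := lt_of_lt_of_le hm hmn
  set L : ℝ := ∑ a, PY a * Real.log (Q a) with hL
  set X : ℝ := ∑ a, PY a * Real.log (PY a / Q a) with hX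
  have hS0 : hanS p 0 = 0 := by
    have hf0 : ∀ z, hanF p 0 z = 1 := by
      intro z
      rw [hanF, Finset.filter_true_of_mem (fun z' _ => by omega)]
      exact hp1
    simp [hanS, hf0]
  have hDm : ∑ y : Fin m → Fin k, Pm y * Real.log (Pm y / ∏ t, Q (y t))
      = hanS p m - m * L := div_formula hn p hp0 hexch Q hQ0 PY hPY m hmn Pm hPm
  have hDn : ∑ z : Fin n → Fin k, p z * Real.log (p z / ∏ t, Q (z t))
      = hanS p n - n * L := by
    refine div_formula hn p hp0 hexch Q hQ0 PY hPY n (le_refl n) p ?_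
    intro y
    have hset : (Finset.univ.filter
        (fun z : Fin n → Fin k => ∀ i : Fin n, z (Fin.castLE (le_refl n) i) = y i))
        = {y} := by
      ext z
      simp only [Finset.mem_filter, Finset.mem_univ, true_and, Finset.mem_singleton]
      constructor
      · intro h; funext i; exact h i
      · intro h i; rw [h]; rfl
    rw [hset, Finset.sum_singleton]
  have hconv : ∀ j, j + 2 ≤ n →
      2 * (hanS p (j + 1) - (↑(j + 1) : ℝ) * L)
        ≤ (hanS p j - (j : ℝ) * L) + (hanS p (j + 2) - (↑(j + 2) : ℝ) * L) := by
    intro j hj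
    have := han_concave p hp0 hexch j hj
    push_cast
    linarith
  have havg : (n : ℝ) * (hanS p m - m * L) ≤ (m : ℝ) * (hanS p n - n * L) :=
    avg_lemma n m hm hmn (fun j => hanS p j - j * L) (by simp [hS0]) hconv
  rw [hDn] at hyp
  rw [hDm]
  have hnpos : (0 : ℝ) < n := Nat.cast_pos.mpr hn
  have hmn0 : (0 : ℝ) ≤ (m : ℝ) / n := by positivity
  have h4 : hanS p m - m * L ≤ (m : ℝ) / n * (hanS p n - n * L) := by
    rw [div_mul_eq_mul_div, le_div_iff₀ hnpos]
    nlinarith [havg]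
  calc hanS p m - m * L ≤ (m : ℝ) / n * (hanS p n - n * L) := h4
    _ ≤ (m : ℝ) / n * (n * X + c) := mul_le_mul_of_nonneg_left hyp hmn0
    _ = m * X + (m : ℝ) / n * c := by field_simp
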